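/- Let S be a cancellative topological semigroup with open shifts. Then the monoid operation induced on the T₀-reflection (Kolmogorov quotient) of the semiregularization S_sr is cancellative. -/

import Mathlib

/-- The semiregularization topology: generated by the regular open sets. -/
def srTop (X : Type*) [TopologicalSpace X] : TopologicalSpace X :=
  TopologicalSpace.generateFrom {U : Set X | interior (closure U) = U}

lemma aux_mem_cl_of_image {S : Type*} [TopologicalSpace S] {f : S → S}
    (ho : IsOpenMap f) (hi : Function.Injective f) {U : Set S} {z : S}
    (hz : f z ∈ closure (f '' U)) : z ∈ closure U := by
  rw [mem_closure_iff] at hz ⊢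
  intro V hV hzV
  obtain ⟨w, hw1, hw2⟩ := hz (f '' V) (ho V hV) ⟨z, hzV, rfl⟩
  obtain ⟨v, hv, hvw⟩ := hw1
  obtain ⟨u, hu, huw⟩ := hw2
  have huv : u = v := hi (huw.trans hvw.symm)
  exact ⟨v, hv, huv ▸ hu⟩

lemma aux_key {S : Type*} [TopologicalSpace S] {f : S → S}
    (hc : Continuous f) (ho : IsOpenMap f) (hi : Function.Injective f)
    {U : Set S} {y : S} (hy : f y ∈ interior (closure (f '' U))) :
    y ∈ interior (closure U) := by
  have hop : IsOpen (f ⁻¹' interior (closure (f '' U))) := isOpen_interior.preimage hc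
  exact interior_maximal
    (fun z hz => aux_mem_cl_of_image ho hi (interior_subset hz)) hop hy

lemma aux_regreg {S : Type*} [TopologicalSpace S] {V : Set S} (hV : IsOpen V) :
    interior (closure (interior (closure V))) = interior (closure V) := by
  apply subset_antisymm
  · exact interior_mono (closure_minimal interior_subset isClosed_closure)
  · exact interior_mono (closure_mono (interior_maximal subset_closure hV))

lemma aux_insep_gen {X : Type*} (G : Set (Set X)) {x y : X}
    (h : ∀ U ∈ G, x ∈ U ↔ y ∈ U) :
    @Inseparable X (TopologicalSpace.generateFrom G) x y := by
  rw [@inseparable_iff_forall_isOpen]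
  intro s hs
  induction hs with
  | basic U hU => exact h U hU
  | univ => simp
  | inter s t _ _ hs ht => simp [Set.mem_inter_iff, hs, ht]
  | sUnion T _ hT =>
    constructor
    · rintro ⟨t, ht, hxt⟩; exact ⟨t, ht, (hT t ht).mp hxt⟩
    · rintro ⟨t, ht, hyt⟩; exact ⟨t, ht, (hT t ht).mpr hyt⟩

lemma aux_srInsep {S : Type*} [TopologicalSpace S] {f : S → S}
    (hc : Continuous f) (ho : IsOpenMap f) (hi : Function.Injective f)
    {x y : S} (h : @Inseparable S (srTop S) (f x) (f y)) :
    @Inseparable S (srTop S) x y := by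
  apply aux_insep_gen
  intro U hU
  simp only [Set.mem_setOf_eq] at hU
  have hUo : IsOpen U := hU ▸ isOpen_interior
  have hWmem : interior (closure (f '' U)) ∈
      {U : Set S | interior (closure U) = U} := aux_regreg (ho U hUo)
  have hWopen : @IsOpen S (srTop S) (interior (closure (f '' U))) :=
    TopologicalSpace.GenerateOpen.basic _ hWmem
  have hiff := (@inseparable_iff_forall_isOpen S (srTop S) _ _).mp h _ hWopen
  have hsub : f '' U ⊆ interior (closure (f '' U)) :=
    interior_maximal subset_closure (ho U hUo)
  constructor
  · intro hx
    have : f y ∈ interior (closure (f '' U)) := hiff.mp (hsub ⟨x, hx, rfl⟩)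
    have := aux_key hc ho hi this
    rwa [hU] at this
  · intro hy
    have : f x ∈ interior (closure (f '' U)) := hiff.mpr (hsub ⟨y, hy, rfl⟩)
    have := aux_key hc ho hi this
    rwa [hU] at this

/-- Let S be a cancellative topological semigroup with open shifts. Then the
operation induced on the T₀-reflection (Kolmogorov quotient) of the
semiregularization S_sr is cancellative: the induced operation satisfies
mk(c·x) = mk(c)·mk(x), so cancellativity says mk(c·x) = mk(c·y) → mk x = mk y
(and the right-sided version). -/
theorem stmt_13 {S : Type*} [Semigroup S] [TopologicalSpace S]
    (hmul : Continuous fun p : S × S => p.1 * p.2)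
    (hshift : ∀ a : S, IsOpenMap (fun x => a * x) ∧ IsOpenMap (fun x => x * a))
    (hcancel : ∀ a x y : S, (a * x = a * y → x = y) ∧ (x * a = y * a → x = y)) :
    ∀ c x y : S,
      (@SeparationQuotient.mk S (srTop S) (c * x) =
          @SeparationQuotient.mk S (srTop S) (c * y) →
        @SeparationQuotient.mk S (srTop S) x = @SeparationQuotient.mk S (srTop S) y) ∧
      (@SeparationQuotient.mk S (srTop S) (x * c) =
          @SeparationQuotient.mk S (srTop S) (y * c) →
        @SeparationQuotient.mk S (srTop S) x = @SeparationQuotient.mk S (srTop S) y) := by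
  intro c x y
  constructor
  · intro h
    rw [@SeparationQuotient.mk_eq_mk] at h ⊢
    exact aux_srInsep (f := fun z => c * z)
      (hmul.comp (continuous_const.prodMk continuous_id))
      (hshift c).1 (fun a b hab => (hcancel c a b).1 hab) h
  · intro h
    rw [@SeparationQuotient.mk_eq_mk] at h ⊢
    exact aux_srInsep (f := fun z => z * c)
      (hmul.comp (continuous_id.prodMk continuous_const))
      (hshift c).2 (fun a b hab => (hcancel c a b).2 hab) h
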